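/- The asymmetric Thurston distance dominates comparison along paths: for any C¹ path γ : [0,1] → E of metrics with γ(0) = g_1, γ(1) = g_2, one has d_T(g_1,g_2) ≤ ∫_0^1 ‖γ̇(t)‖_T dt, where ‖·‖_T is the Finsler norm ‖f‖_T = (1/2) sup_{m ergodic} ∫ π_2^*f dm and d_T satisfies the triangle inequality and the first-order expansion d_T(γ(t_i), γ(t_{i+1})) = ‖γ̇(t_i)‖_T (t_{i+1} − t_i) + O(|t_{i+1}−t_i|²). Hence d_T ≤ d_F, the induced Finsler path distance. -/

import Mathlib

open MeasureTheory

/-- the Thurston asymmetric distance is dominated by the Finsler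
length of any C¹ path: if `d_T` satisfies the triangle inequality and the
first-order expansion `d_T(γ(t),γ(s)) ≤ N(t)(s−t) + C(s−t)²` with `N(t) = ‖γ̇(t)‖_T`
continuous, then `d_T(γ(0),γ(1)) ≤ ∫₀¹ ‖γ̇(t)‖_T dt`; hence `d_T ≤ d_F`. -/
theorem stmt_18 {X : Type*} (γ : ℝ → X) (dT : X → X → ℝ) (N : ℝ → ℝ)
    (htri : ∀ a b c : X, dT a c ≤ dT a b + dT b c)
    (hNcont : ContinuousOn N (Set.Icc 0 1))
    (C : ℝ)
    (hexp : ∀ t s : ℝ, 0 ≤ t → t ≤ s → s ≤ 1 →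
      dT (γ t) (γ s) ≤ N t * (s - t) + C * (s - t) ^ 2) :
    dT (γ 0) (γ 1) ≤ ∫ t in (0:ℝ)..1, N t := by
  refine le_of_forall_pos_le_add ?_
  intro ε hε
  -- uniform continuity of N on [0,1]
  have hUC : UniformContinuousOn N (Set.Icc 0 1) :=
    isCompact_Icc.uniformContinuousOn_of_continuous hNcont
  rw [Metric.uniformContinuousOn_iff] at hUC
  obtain ⟨δ, hδ, hδ'⟩ := hUC (ε/2) (by positivity)
  -- choose n large
  obtain ⟨n, hnn⟩ := exists_nat_gt (max (1/δ) (2*|C|/ε))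
  have hn1 : (1/δ : ℝ) < n := lt_of_le_of_lt (le_max_left _ _) hnn
  have hn2 : (2*|C|/ε : ℝ) < n := lt_of_le_of_lt (le_max_right _ _) hnn
  have hnpos : (0:ℝ) < n := lt_trans (by positivity) hn1
  have hn0 : 0 < n := by exact_mod_cast hnpos
  have hinv : (1:ℝ)/n < δ := by
    rw [div_lt_iff₀ hnpos]
    rw [div_lt_iff₀ hδ] at hn1
    linarith
  set a : ℕ → ℝ := fun i => (i:ℝ)/n with ha
  have hmem : ∀ i : ℕ, i ≤ n → a i ∈ Set.Icc (0:ℝ) 1 := by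
    intro i hi
    constructor
    · positivity
    · rw [div_le_one hnpos]; exact_mod_cast hi
  have hstep : ∀ i : ℕ, a (i+1) - a i = 1/n := by
    intro i
    simp only [ha]
    push_cast
    field_simp
    ring
  have hle : ∀ i : ℕ, a i ≤ a (i+1) := by
    intro i
    have := hstep i
    have : (0:ℝ) < 1/n := by positivity
    nlinarith [hstep i]
  -- telescoping triangle inequality
  have tele : ∀ k : ℕ, k ≤ n →
      dT (γ (a 0)) (γ (a k)) ≤ ∑ i ∈ Finset.range k, dT (γ (a i)) (γ (a (i+1))) := by
    intro k
    induction k with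
    | zero =>
      intro _
      have h0 := hexp 0 0 le_rfl le_rfl zero_le_one
      simp only [ha, Nat.cast_zero, zero_div, Finset.range_zero, Finset.sum_empty]
      simpa using h0
    | succ k ih =>
      intro hk
      rw [Finset.sum_range_succ]
      exact le_trans (htri _ (γ (a k)) _)
        (add_le_add_left (ih (Nat.le_of_succ_le hk)) _)
  -- per-step bound
  have hterm : ∀ i : ℕ, i < n →
      dT (γ (a i)) (γ (a (i+1))) ≤ N (a i) * (1/n) + C * (1/n)^2 := by
    intro i hi
    have h := hexp (a i) (a (i+1)) (hmem i (le_of_lt hi)).1 (hle i) (hmem (i+1) hi).2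
    rwa [show a (i+1) - a i = 1/n from hstep i] at h
  -- integrability
  have hint : ∀ i : ℕ, i < n → IntervalIntegrable N volume (a i) (a (i+1)) := by
    intro i hi
    refine (hNcont.mono ?_).intervalIntegrable_of_Icc (hle i)
    exact Set.Icc_subset_Icc (hmem i (le_of_lt hi)).1 (hmem (i+1) hi).2
  have hsplit : ∑ i ∈ Finset.range n, ∫ t in a i..a (i+1), N t
      = ∫ t in (a 0)..(a n), N t := intervalIntegral.sum_integral_adjacent_intervals hint
  -- per-interval lower bound for the integral
  have hlow : ∀ i : ℕ, i < n →
      (N (a i) - ε/2) * (1/n) ≤ ∫ t in a i..a (i+1), N t := by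
    intro i hi
    have hconst : ∫ t in a i..a (i+1), (N (a i) - ε/2) = (N (a i) - ε/2) * (1/n) := by
      rw [intervalIntegral.integral_const, hstep i, smul_eq_mul, mul_comm]
    rw [← hconst]
    refine intervalIntegral.integral_mono_on (hle i)
      (intervalIntegrable_const) (hint i hi) ?_
    intro t ht
    have htmem : t ∈ Set.Icc (0:ℝ) 1 :=
      Set.Icc_subset_Icc (hmem i (le_of_lt hi)).1 (hmem (i+1) hi).2 ht
    have hdist : dist (a i) t < δ := by
      rw [Real.dist_eq, abs_sub_comm]
      have h1 : t - a i ≤ 1/n := by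
        have := ht.2; have := hstep i; linarith
      have h2 : 0 ≤ t - a i := by linarith [ht.1]
      rw [abs_of_nonneg h2]
      linarith
    have := hδ' (a i) (hmem i (le_of_lt hi)) t htmem hdist
    rw [Real.dist_eq] at this
    have := abs_lt.mp this
    linarith [this.1, this.2]
  -- sum the lower bounds
  have hsum_low : ∑ i ∈ Finset.range n, (N (a i) - ε/2) * (1/n)
      ≤ ∫ t in (0:ℝ)..1, N t := by
    have h0 : a 0 = 0 := by simp [ha]
    have h1 : a n = 1 := by simp only [ha]; exact div_self hnpos.ne'
    calc ∑ i ∈ Finset.range n, (N (a i) - ε/2) * (1/n)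
        ≤ ∑ i ∈ Finset.range n, ∫ t in a i..a (i+1), N t :=
          Finset.sum_le_sum (fun i hi => hlow i (Finset.mem_range.mp hi))
      _ = ∫ t in (0:ℝ)..1, N t := by rw [hsplit, h0, h1]
  -- assemble
  have hCn : C * (1/n) ≤ ε/2 := by
    have h1 : C ≤ |C| := le_abs_self C
    rw [div_lt_iff₀ hε] at hn2
    have : C * (1/n) ≤ |C| * (1/n) := by
      apply mul_le_mul_of_nonneg_right h1; positivity
    calc C * (1/n) ≤ |C| * (1/n) := this
      _ ≤ ε/2 := by
          rw [mul_one_div, div_le_div_iff₀ hnpos (by norm_num : (0:ℝ) < 2)]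
          linarith
  have h0 : a 0 = 0 := by simp [ha]
  have h1 : a n = 1 := by simp only [ha]; exact div_self hnpos.ne'
  have expand : ∑ i ∈ Finset.range n, (N (a i) - ε/2) * (1/n)
      = (∑ i ∈ Finset.range n, N (a i) * (1/n)) - ε/2 := by
    have : ∑ _i ∈ Finset.range n, (ε/2) * (1/n) = ε/2 := by
      rw [Finset.sum_const, Finset.card_range, nsmul_eq_mul]
      field_simp
    calc ∑ i ∈ Finset.range n, (N (a i) - ε/2) * (1/n)
        = ∑ i ∈ Finset.range n, (N (a i) * (1/n) - (ε/2) * (1/n)) := by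
          apply Finset.sum_congr rfl; intro i _; ring
      _ = (∑ i ∈ Finset.range n, N (a i) * (1/n))
          - ∑ _i ∈ Finset.range n, (ε/2) * (1/n) := Finset.sum_sub_distrib _ _
      _ = (∑ i ∈ Finset.range n, N (a i) * (1/n)) - ε/2 := by rw [this]
  have sumC : ∑ _i ∈ Finset.range n, C * (1/n)^2 = C * (1/n) := by
    rw [Finset.sum_const, Finset.card_range, nsmul_eq_mul]
    field_simp
  calc dT (γ 0) (γ 1)
      = dT (γ (a 0)) (γ (a n)) := by rw [h0, h1]
    _ ≤ ∑ i ∈ Finset.range n, dT (γ (a i)) (γ (a (i+1))) := tele n le_rfl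
    _ ≤ ∑ i ∈ Finset.range n, (N (a i) * (1/n) + C * (1/n)^2) :=
        Finset.sum_le_sum (fun i hi => hterm i (Finset.mem_range.mp hi))
    _ = (∑ i ∈ Finset.range n, N (a i) * (1/n)) + C * (1/n) := by
        rw [Finset.sum_add_distrib, sumC]
    _ ≤ ((∫ t in (0:ℝ)..1, N t) + ε/2) + ε/2 := by
        have := hsum_low
        rw [expand] at this
        linarith
    _ = (∫ t in (0:ℝ)..1, N t) + ε := by ring
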